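/- Let M be a compact metric space. A collection 𝒞 of subsets of M is point-convergent (every sequence of distinct elements of 𝒞 has limit set of cardinality at most 1, where the limit set is the set of points that are limits of sequences x_i ∈ C_i) if and only if 𝒞 is a null family (for every ε > 0 only finitely many elements of 𝒞 have diameter greater than ε). -/

import Mathlib

/-- In a compact metric space, a collection of nonempty subsets is
point-convergent (every sequence of pairwise distinct members has at most one
limit point, where limit points are limits of sequences of points chosen from
the members) if and only if it is a null family (for every `ε > 0` only
finitely many members have diameter `> ε`). -/
theorem pointConvergent_iff_nullFamily
    {M : Type*} [MetricSpace M] [CompactSpace M]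
    (𝒞 : Set (Set M)) (hne : ∀ C ∈ 𝒞, C.Nonempty) :
    (∀ C : ℕ → Set M, (∀ i, C i ∈ 𝒞) → Function.Injective C →
        {p : M | ∃ x : ℕ → M, (∀ i, x i ∈ C i) ∧
          Filter.Tendsto x Filter.atTop (nhds p)}.Subsingleton)
      ↔ (∀ ε : ℝ, 0 < ε → {C ∈ 𝒞 | ε < Metric.diam C}.Finite) := by
  constructor
  · intro hpc ε hε
    by_contra hinf
    have hinf' : {C ∈ 𝒞 | ε < Metric.diam C}.Infinite := hinf
    set S := {C ∈ 𝒞 | ε < Metric.diam C}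
    let f := hinf'.natEmbedding
    set C : ℕ → Set M := fun i => (f i : Set M) with hC
    have hCinj : Function.Injective C :=
      Subtype.val_injective.comp f.injective
    have hCmem : ∀ i, C i ∈ 𝒞 := fun i => (f i).2.1
    have hCd : ∀ i, ε < Metric.diam (C i) := fun i => (f i).2.2
    -- pick two far-apart points in each C i
    have hpts : ∀ i, ∃ a ∈ C i, ∃ b ∈ C i, ε < dist a b := by
      intro i
      by_contra h
      push_neg at h
      exact absurd (Metric.diam_le_of_forall_dist_le hε.le
        (fun a ha b hb => h a ha b hb)) (not_le.mpr (hCd i))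
    choose a ha b hb hd using hpts
    obtain ⟨p, -, φ, hφ, hap⟩ := isCompact_univ.tendsto_subseq (fun i => Set.mem_univ (a i))
    obtain ⟨q, -, ψ, hψ, hbq⟩ := isCompact_univ.tendsto_subseq
      (fun i => Set.mem_univ ((b ∘ φ) i))
    have hφψ : StrictMono (φ ∘ ψ) := hφ.comp hψ
    have hDinj : Function.Injective (C ∘ (φ ∘ ψ)) := hCinj.comp hφψ.injective
    have hap' : Filter.Tendsto (fun i => a (φ (ψ i))) Filter.atTop (nhds p) :=
      hap.comp hψ.tendsto_atTop
    have hbq' : Filter.Tendsto (fun i => b (φ (ψ i))) Filter.atTop (nhds q) := hbq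
    have hpmem : p ∈ {p : M | ∃ x : ℕ → M, (∀ i, x i ∈ (C ∘ (φ ∘ ψ)) i) ∧
        Filter.Tendsto x Filter.atTop (nhds p)} :=
      ⟨fun i => a (φ (ψ i)), fun i => ha _, hap'⟩
    have hqmem : q ∈ {p : M | ∃ x : ℕ → M, (∀ i, x i ∈ (C ∘ (φ ∘ ψ)) i) ∧
        Filter.Tendsto x Filter.atTop (nhds p)} :=
      ⟨fun i => b (φ (ψ i)), fun i => hb _, hbq'⟩
    have hpq : p = q := hpc _ (fun i => hCmem _) hDinj hpmem hqmem
    have hdist : ε ≤ dist p q := by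
      have : Filter.Tendsto (fun i => dist (a (φ (ψ i))) (b (φ (ψ i))))
          Filter.atTop (nhds (dist p q)) := hap'.dist hbq'
      exact ge_of_tendsto' this (fun i => (hd _).le)
    rw [hpq, dist_self] at hdist
    exact absurd hdist (not_le.mpr hε)
  · intro hnull C hCmem hCinj p hp q hq
    obtain ⟨x, hx, hxp⟩ := hp
    obtain ⟨y, hy, hyq⟩ := hq
    have hb : ∀ i, Bornology.IsBounded (C i) :=
      fun i => isCompact_univ.isBounded.subset (Set.subset_univ _)
    have key : ∀ ε : ℝ, 0 < ε → dist p q ≤ ε := by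
      intro ε hε
      have hfin : {i : ℕ | ε < Metric.diam (C i)}.Finite := by
        have : {i : ℕ | ε < Metric.diam (C i)} ⊆ C ⁻¹' {D ∈ 𝒞 | ε < Metric.diam D} := by
          intro i hi
          exact ⟨hCmem i, hi⟩
        exact Set.Finite.subset ((hnull ε hε).preimage (Set.injOn_of_injective hCinj)) this
      have hev : ∀ᶠ i in Filter.atTop, dist (x i) (y i) ≤ ε := by
        have : ∀ᶠ i in Filter.cofinite, i ∉ {i : ℕ | ε < Metric.diam (C i)} :=
          hfin.eventually_cofinite_notMem
        rw [Nat.cofinite_eq_atTop] at this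
        filter_upwards [this] with i hi
        have hdi : Metric.diam (C i) ≤ ε := not_lt.mp hi
        exact (Metric.dist_le_diam_of_mem (hb i) (hx i) (hy i)).trans hdi
      exact le_of_tendsto (hxp.dist hyq) hev
    exact dist_le_zero.mp (le_of_forall_pos_le_add fun ε hε => by simpa using key ε hε)
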